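/- Let d be even and s a positive integer with 2s ≤ d. Then for every ε ∈ I^s, the antipode of B_ε equals B_{ε̄}; that is, {x̄ : x ∈ B_ε} = B_{ε̄}, where ε̄ denotes the antipode of ε. -/

import Mathlib

/-- Strings of length `d` over the alphabet `S = {0,1,*}`; `none` is the joker `*`. -/
abbrev JString (d : ℕ) := Fin d → Option Bool

/-- The distance between two strings over `{0,1,*}`: the number of positions where both
entries are binary digits and they differ. -/
def jDist {d : ℕ} (u v : JString d) : ℕ :=
  (Finset.univ.filter fun i => ∃ a b : Bool, u i = some a ∧ v i = some b ∧ a ≠ b).card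

/-- `nkd k d` is `n(k,d)`: the maximum size of a family of strings in `S^d` any two
distinct members of which are at distance at least `1` and at most `k`. -/
noncomputable def nkd (k d : ℕ) : ℕ :=
  sSup {m | ∃ F : Finset (JString d),
    (∀ u ∈ F, ∀ v ∈ F, u ≠ v → 1 ≤ jDist u v ∧ jDist u v ≤ k) ∧ F.card = m}

/-- The weight `|x|` of a binary string. -/
def wt {n : ℕ} (x : Fin n → Bool) : ℕ := (Finset.univ.filter fun i => x i = true).card

/-- The inner product `⟨x,y⟩` of two binary strings. -/
def ip {n : ℕ} (x y : Fin n → Bool) : ℕ :=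
  (Finset.univ.filter fun i => x i = true ∧ y i = true).card

/-- The antipode `x̄` of a binary string. -/
def antipode {n : ℕ} (x : Fin n → Bool) : Fin n → Bool := fun i => !(x i)

/-- `t(ε)` (0-based): the largest index at which `ε` differs from its last entry; for
nonconstant `ε` this is the unique (0-based) index `i` with `ε i ≠ ε (i+1) = ⋯ = ε (s-1)`. -/
noncomputable def tIdx {s : ℕ} (ε : Fin s → Bool) : ℕ :=
  sSup {i : ℕ | ∃ h : i < s, ∃ h' : s - 1 < s, ε ⟨i, h⟩ ≠ ε ⟨s - 1, h'⟩}

/-- The set `A_ε = {ε_1} × ⋯ × {ε_{t(ε)}} × I^{s-1-t(ε)} ⊆ I^{s-1}`. -/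
def Aset {s : ℕ} (ε : Fin s → Bool) : Set (Fin (s - 1) → Bool) :=
  {x | ∀ j : Fin (s - 1), (j : ℕ) ≤ tIdx ε →
    x j = ε ⟨(j : ℕ), Nat.lt_of_lt_of_le j.isLt (Nat.sub_le s 1)⟩}

/-- The sets `X_k ⊆ I^{d-s}`: `X_0 = {|x| ≤ d/2 - s}`, `X_k = {|x| = d/2 - s + k}` for
`0 < k < s`, and `X_s = {|x| ≥ d/2}`. -/
def Xk (d s k : ℕ) : Set (Fin (d - s) → Bool) :=
  if k = 0 then {x | wt x ≤ d / 2 - s}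
  else if k = s then {x | d / 2 ≤ wt x}
  else {x | wt x = d / 2 - s + k}

/-- The last `m` coordinates of a binary string of length `n` (junk values if `m > n`). -/
def suffix (m : ℕ) {n : ℕ} (x : Fin n → Bool) : Fin m → Bool :=
  fun j => if h : n - m + (j : ℕ) < n then x ⟨n - m + (j : ℕ), h⟩ else false

/-- The set `B_ε ⊆ I^{d-s}`: `B_α = X_0`, `B_ω = X_s`, and for `ε ∉ {α,ω}`,
`B_ε = X_{|ε|} ∩ (I^{d-2s+1} × A_ε)`, identifying `I^{d-s}` with `I^{d-2s+1} × I^{s-1}`. -/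
def Bset (d : ℕ) {s : ℕ} (ε : Fin s → Bool) : Set (Fin (d - s) → Bool) :=
  if ε = (fun _ => false) then Xk d s 0
  else if ε = (fun _ => true) then Xk d s s
  else Xk d s (wt ε) ∩ {x | suffix (s - 1) x ∈ Aset ε}

/-- Concatenation of a binary string of length `d - s` with a string over `{0,1,*}` of
length `s`, producing a string over `{0,1,*}` of length `d`. -/
def glue {d s : ℕ} (x : Fin (d - s) → Bool) (w : Fin s → Option Bool) : JString d :=
  fun i => if h : (i : ℕ) < d - s then some (x ⟨(i : ℕ), h⟩)
    else if h' : (i : ℕ) - (d - s) < s then w ⟨(i : ℕ) - (d - s), h'⟩ else none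

/-- The set `*^ε = *^{ε_1} × ⋯ × *^{ε_s} ⊆ S^s`, where `*^0 = {*}` and `*^1 = {0,1}`. -/
def starSet {s : ℕ} (ε : Fin s → Bool) : Set (Fin s → Option Bool) :=
  {w | ∀ j, if ε j = true then ∃ b : Bool, w j = some b else w j = none}

/-- The set `C_ε = B_ε × *^ε ⊆ S^d`. -/
def Cset (d : ℕ) {s : ℕ} (ε : Fin s → Bool) : Set (JString d) :=
  {u | ∃ x ∈ Bset d ε, ∃ w ∈ starSet ε, u = glue x w}

lemma antipode_antipode' {n : ℕ} (x : Fin n → Bool) : antipode (antipode x) = x := by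
  funext i; simp [antipode]

lemma wt_antipode {n : ℕ} (x : Fin n → Bool) : wt (antipode x) = n - wt x := by
  unfold wt antipode
  have h : (Finset.univ.filter fun i => (!(x i)) = true)
      = Finset.univ \ (Finset.univ.filter fun i : Fin n => x i = true) := by
    ext i; simp
  rw [h, Finset.card_sdiff]
  simp

lemma wt_le {n : ℕ} (x : Fin n → Bool) : wt x ≤ n := by
  unfold wt
  simpa using Finset.card_filter_le (Finset.univ : Finset (Fin n)) _

lemma tIdx_antipode {s : ℕ} (ε : Fin s → Bool) : tIdx (antipode ε) = tIdx ε := by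
  unfold tIdx antipode
  congr 1
  ext i
  simp only [ne_eq, Set.mem_setOf_eq]
  constructor <;> rintro ⟨h, h', hne⟩ <;> exact ⟨h, h', by simpa using hne⟩

lemma antipode_eq_false_iff {s : ℕ} (ε : Fin s → Bool) :
    (antipode ε = fun _ => false) ↔ ε = fun _ => true := by
  simp [antipode, funext_iff]

lemma antipode_eq_true_iff {s : ℕ} (ε : Fin s → Bool) :
    (antipode ε = fun _ => true) ↔ ε = fun _ => false := by
  simp [antipode, funext_iff]

lemma wt_eq_zero_iff {n : ℕ} (x : Fin n → Bool) : wt x = 0 ↔ x = fun _ => false := by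
  unfold wt
  rw [Finset.card_eq_zero, Finset.filter_eq_empty_iff, funext_iff]
  simp

lemma wt_eq_top_iff {n : ℕ} (x : Fin n → Bool) : wt x = n ↔ x = fun _ => true := by
  unfold wt
  constructor
  · intro h
    have h1 := Finset.eq_univ_of_card _ (h.trans (Fintype.card_fin n).symm)
    funext i
    have h2 : i ∈ Finset.univ.filter fun i => x i = true := by
      rw [h1]; exact Finset.mem_univ i
    simpa using h2
  · intro h; subst h; simp

lemma suffix_antipode {n m : ℕ} (h : m ≤ n) (x : Fin n → Bool) :
    suffix m (antipode x) = antipode (suffix m x) := by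
  funext j
  have hj := j.isLt
  have hlt : n - m + (j : ℕ) < n := by omega
  simp [suffix, antipode, hlt]

lemma mem_Aset_antipode {s : ℕ} (ε : Fin s → Bool) (y : Fin (s - 1) → Bool) :
    antipode y ∈ Aset (antipode ε) ↔ y ∈ Aset ε := by
  unfold Aset
  simp only [Set.mem_setOf_eq, tIdx_antipode, antipode]
  constructor <;> intro h j hj <;> have h2 := h j hj
  · exact Bool.not_inj h2
  · simp [h2]

lemma Xk_zero (d s : ℕ) : Xk d s 0 = {x | wt x ≤ d / 2 - s} := by
  unfold Xk; rw [if_pos rfl]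

lemma Xk_top (d s : ℕ) (hs : s ≠ 0) : Xk d s s = {x | d / 2 ≤ wt x} := by
  unfold Xk; rw [if_neg hs, if_pos rfl]

lemma Xk_mid (d s k : ℕ) (h0 : k ≠ 0) (hk : k ≠ s) :
    Xk d s k = {x | wt x = d / 2 - s + k} := by
  unfold Xk; rw [if_neg h0, if_neg hk]

lemma mem_Bset_antipode (d s : ℕ) (hde : Even d) (hs : 0 < s) (hsd : 2 * s ≤ d)
    (ε : Fin s → Bool) (x : Fin (d - s) → Bool) :
    antipode x ∈ Bset d (antipode ε) ↔ x ∈ Bset d ε := by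
  obtain ⟨m, hm⟩ := hde
  have hwx : wt x ≤ d - s := wt_le x
  have hwa : wt (antipode x) = (d - s) - wt x := wt_antipode x
  have hne : (fun _ : Fin s => true) ≠ fun _ : Fin s => false := by
    intro h; have := congrFun h ⟨0, hs⟩; simp at this
  by_cases hα : ε = fun _ => false
  · have ha : antipode ε = fun _ => true := (antipode_eq_true_iff ε).mpr hα
    rw [ha, hα]
    unfold Bset
    rw [if_neg hne, if_pos rfl, if_pos rfl, Xk_zero, Xk_top d s (by omega)]
    simp only [Set.mem_setOf_eq, hwa]
    omega
  · by_cases hω : ε = fun _ => true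
    · have ha : antipode ε = fun _ => false := (antipode_eq_false_iff ε).mpr hω
      rw [ha, hω]
      unfold Bset
      rw [if_pos rfl, if_neg hne, if_pos rfl, Xk_zero, Xk_top d s (by omega)]
      simp only [Set.mem_setOf_eq, hwa]
      omega
    · have haα : antipode ε ≠ fun _ => false := fun h => hω ((antipode_eq_false_iff ε).mp h)
      have haω : antipode ε ≠ fun _ => true := fun h => hα ((antipode_eq_true_iff ε).mp h)
      have hk0 : wt ε ≠ 0 := fun h => hα ((wt_eq_zero_iff ε).mp h)
      have hks : wt ε ≠ s := fun h => hω ((wt_eq_top_iff ε).mp h)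
      have hkle : wt ε ≤ s := wt_le ε
      have hwae : wt (antipode ε) = s - wt ε := wt_antipode ε
      unfold Bset
      rw [if_neg haα, if_neg haω, if_neg hα, if_neg hω, hwae,
        Xk_mid d s (s - wt ε) (by omega) (by omega), Xk_mid d s (wt ε) hk0 hks]
      simp only [Set.mem_inter_iff, Set.mem_setOf_eq, hwa,
        suffix_antipode (by omega : s - 1 ≤ d - s), mem_Aset_antipode]
      constructor <;> rintro ⟨h1, h2⟩ <;> exact ⟨by omega, h2⟩

/-- Let `d` be even and `s` positive with `2s ≤ d`. For every `ε ∈ I^s`,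
the antipode of `B_ε` equals `B_{ε̄}`: `{x̄ : x ∈ B_ε} = B_{ε̄}`. -/
theorem antipode_Bset (d s : ℕ) (hde : Even d) (hs : 0 < s) (hsd : 2 * s ≤ d)
    (ε : Fin s → Bool) :
    antipode '' Bset d ε = Bset d (antipode ε) := by
  ext x
  simp only [Set.mem_image]
  constructor
  · rintro ⟨y, hy, rfl⟩
    exact (mem_Bset_antipode d s hde hs hsd ε y).mpr hy
  · intro hx
    refine ⟨antipode x, ?_, antipode_antipode' x⟩
    have := (mem_Bset_antipode d s hde hs hsd (antipode ε) x)
    rw [antipode_antipode'] at this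
    exact this.mpr hx
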